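/- Every congruence on the monoid ℕ^n (an equivalence relation that is a submonoid of ℕ^n × ℕ^n, i.e. closed under componentwise addition) is finitely generated: there exists a finite subset ρ ⊆ ℕ^n × ℕ^n such that the congruence is the smallest congruence containing ρ. (Redei's theorem.) -/

import Mathlib

open Finsupp AddMonoidAlgebra

lemma exists_finset_span_eq' {R M : Type*} [Ring R] [AddCommGroup M] [Module R M]
    [IsNoetherian R M] (s : Set M) :
    ∃ t : Finset M, ↑t ⊆ s ∧ Submodule.span R (↑t : Set M) = Submodule.span R s := by
  classical
  obtain ⟨T0, hT0⟩ := IsNoetherian.noetherian (Submodule.span R s)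
  choose f hf1 hf2 using fun x (hx : x ∈ Submodule.span R s) =>
    Submodule.mem_span_finite_of_mem_span hx
  refine ⟨T0.attach.biUnion (fun x => f x.1 (hT0 ▸ Submodule.subset_span x.2)), ?_, ?_⟩
  · intro y hy
    simp only [Finset.coe_biUnion, Set.mem_iUnion, Finset.mem_coe] at hy
    obtain ⟨x, hx, hy⟩ := hy
    exact hf1 _ _ hy
  · refine le_antisymm (Submodule.span_mono ?_) ?_
    · intro y hy
      simp only [Finset.coe_biUnion, Set.mem_iUnion, Finset.mem_coe] at hy
      obtain ⟨x, hx, hy⟩ := hy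
      exact hf1 _ _ hy
    · refine le_trans (le_of_eq hT0.symm) ?_
      refine Submodule.span_le.2 fun x hx => ?_
      refine Submodule.span_mono ?_ (hf2 x (hT0 ▸ Submodule.subset_span hx))
      intro y hy
      simp only [Finset.coe_biUnion, Set.mem_iUnion, Finset.mem_coe]
      exact ⟨⟨x, hx⟩, Finset.mem_attach _ _, hy⟩

noncomputable instance redei_noeth (n : ℕ) :
    IsNoetherianRing (AddMonoidAlgebra ℚ (Fin n → ℕ)) := by
  have e : (Fin n →₀ ℕ) ≃+ (Fin n → ℕ) := Finsupp.addEquivFunOnFinite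
  exact isNoetherianRing_of_ringEquiv (MvPolynomial (Fin n) ℚ)
    (AddMonoidAlgebra.domCongr ℚ ℚ e).toRingEquiv

/-- Redei's theorem: Every congruence on the monoid `ℕ^n`
(an additive congruence, i.e. an equivalence relation closed under componentwise
addition) is finitely generated: there is a finite set `ρ ⊆ ℕ^n × ℕ^n` such
that the congruence is the smallest congruence containing `ρ`. -/
theorem redei_congruence_fg (n : ℕ) (c : AddCon (Fin n → ℕ)) :
    ∃ ρ : Finset ((Fin n → ℕ) × (Fin n → ℕ)),
      c = addConGen fun a b => (a, b) ∈ ρ := by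
  classical
  set M := Fin n → ℕ
  set B : M × M → AddMonoidAlgebra ℚ M :=
    fun p => AddMonoidAlgebra.single p.1 (1 : ℚ) - AddMonoidAlgebra.single p.2 1 with hB
  obtain ⟨T, hTsub, hTspan⟩ := exists_finset_span_eq' (R := AddMonoidAlgebra ℚ M)
    (B '' {p | c p.1 p.2})
  obtain ⟨ρ, hρsub, hρim⟩ := (Finset.subset_set_image_iff).1 hTsub
  refine ⟨ρ, ?_⟩
  set d := addConGen fun a b => (a, b) ∈ ρ with hd
  refine le_antisymm ?_ (AddCon.addConGen_le.2 fun a b hab => hρsub hab)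
  intro a b hab
  let φ : AddMonoidAlgebra ℚ M →+* AddMonoidAlgebra ℚ d.Quotient :=
    AddMonoidAlgebra.mapDomainRingHom ℚ d.mk'
  have hφs : ∀ x : M, φ (AddMonoidAlgebra.single x (1:ℚ)) = AddMonoidAlgebra.single (d.mk' x) 1 := by
    intro x
    show AddMonoidAlgebra.mapDomain d.mk' (AddMonoidAlgebra.single x (1:ℚ)) = _
    rw [AddMonoidAlgebra.mapDomain_single]
  have hker : Submodule.span (AddMonoidAlgebra ℚ M) (B '' {p | c p.1 p.2})
      ≤ (RingHom.ker φ : Ideal (AddMonoidAlgebra ℚ M)) := by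
    rw [← hTspan]
    refine Submodule.span_le.2 fun x hx => ?_
    rw [← hρim] at hx
    obtain ⟨p, hp, rfl⟩ := Finset.mem_image.1 (Finset.mem_coe.1 hx)
    have hpd : d p.1 p.2 := AddConGen.Rel.of _ _ hp
    have hq : d.mk' p.1 = d.mk' p.2 := (AddCon.eq d).2 hpd
    simp only [SetLike.mem_coe, RingHom.mem_ker, hB, map_sub]
    rw [hφs, hφs, hq, sub_self]
  have hmem : B (a, b) ∈ RingHom.ker φ :=
    hker (Submodule.subset_span ⟨(a, b), hab, rfl⟩)
  rw [RingHom.mem_ker, hB, map_sub, sub_eq_zero, hφs, hφs] at hmem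
  exact (AddCon.eq d).1 (AddMonoidAlgebra.single_left_injective one_ne_zero hmem)
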